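/- Let (φ,ξ,η,g) be an almost contact metric structure induced by a G₂ structure, with local orthonormal frame {e₁,…,e₆,ξ}. Then (∇_{e_i}Φ)(φe_i, ξ) = g(ξ, ∇_{e_i}e_i) for each i, and i₁₄(∇Φ) := Σ_{i,j}(∇_{e_i}Φ)(φe_i,ξ)·(∇_{e_j}Φ)(φe_j,ξ) = (div ξ)². In particular i₁₄(∇Φ) = 0 if and only if div ξ = 0. -/

import Mathlib

open scoped RealInnerProductSpace

/-- For the almost contact metric structure induced by a G₂ structure,
with local orthonormal frame `{e₁,…,e₆,ξ}`, `(∇_{e_i}Φ)(φe_i, ξ) = g(ξ, ∇_{e_i}e_i)`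
for each `i`, and `i₁₄(∇Φ) = Σ_{i,j}(∇_{e_i}Φ)(φe_i,ξ)·(∇_{e_j}Φ)(φe_j,ξ) = (div ξ)²`;
in particular `i₁₄(∇Φ) = 0 ↔ div ξ = 0`. -/
theorem i14_eq_div_sq
    {V : Type*} [NormedAddCommGroup V] [InnerProductSpace ℝ V]
    (cross : V → V → V)
    (hanti : ∀ x y : V, cross x y = - cross y x)
    (hskew : ∀ x y z : V, ⟪cross x y, z⟫ = - ⟪cross x z, y⟫)
    (nabla : V → V → V) (D : V → ℝ → ℝ)
    (hD0 : ∀ x, D x 0 = 0) (hD1 : ∀ x, D x 1 = 0)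
    (hDg : ∀ x y z : V, D x ⟪y, z⟫ = ⟪nabla x y, z⟫ + ⟪y, nabla x z⟫)
    (ξ : V) (e : Fin 6 → V)
    (hON : Orthonormal ℝ (Fin.snoc e ξ : Fin 7 → V))
    -- `ξ × (ξ × x) = -x + ⟨ξ,x⟩ξ`:
    (hdouble : ∀ x : V, cross ξ (cross ξ x) = -x + ⟪ξ, x⟫ • ξ)
    (Φ : V → V → ℝ) (hΦ : ∀ x y, Φ x y = ⟪x, cross ξ y⟫)
    (nablaPhi : V → V → V → ℝ)
    (hnablaPhi : ∀ x y z, nablaPhi x y z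
      = D x (Φ y z) - Φ (nabla x y) z - Φ y (nabla x z))
    (divξ : ℝ)
    (hdiv : divξ = (∑ i : Fin 6, ⟪nabla (e i) ξ, e i⟫) + ⟪nabla ξ ξ, ξ⟫) :
    (∀ i, nablaPhi (e i) (cross ξ (e i)) ξ = ⟪ξ, nabla (e i) (e i)⟫) ∧
    (∑ i : Fin 6, ∑ j : Fin 6,
        nablaPhi (e i) (cross ξ (e i)) ξ * nablaPhi (e j) (cross ξ (e j)) ξ
      = divξ ^ 2) ∧
    ((∑ i : Fin 6, ∑ j : Fin 6,
        nablaPhi (e i) (cross ξ (e i)) ξ * nablaPhi (e j) (cross ξ (e j)) ξ = 0) ↔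
      divξ = 0) := by
  have hONite := orthonormal_iff_ite.mp hON
  -- ⟪ξ, ξ⟫ = 1
  have hξξ : ⟪ξ, ξ⟫ = 1 := by
    have := hONite (Fin.last 6) (Fin.last 6)
    rw [Fin.snoc_last] at this
    simpa using this
  -- ⟪ξ, e i⟫ = 0
  have hξe : ∀ i : Fin 6, ⟪ξ, e i⟫ = 0 := by
    intro i
    have := hONite (Fin.last 6) (Fin.castSucc i)
    have hne : (Fin.last 6 : Fin 7) ≠ Fin.castSucc i := by
      simp [Fin.ext_iff, Fin.castSucc]
      omega
    rw [Fin.snoc_last, Fin.snoc_castSucc, if_neg hne] at this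
    exact this
  -- cross ξ ξ = 0
  have hcross0 : cross ξ ξ = 0 := by
    have h := hanti ξ ξ
    have h2 : cross ξ ξ + cross ξ ξ = 0 := by
      nth_rewrite 2 [h]; simp
    have : (2 : ℝ) • cross ξ ξ = 0 := by rw [two_smul]; exact h2
    simpa using (smul_eq_zero.mp this).resolve_left (by norm_num)
  -- the pointwise identity
  have key : ∀ i, nablaPhi (e i) (cross ξ (e i)) ξ = ⟪ξ, nabla (e i) (e i)⟫ := by
    intro i
    have h1 : Φ (cross ξ (e i)) ξ = 0 := by rw [hΦ, hcross0, inner_zero_right]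
    have h2 : Φ (nabla (e i) (cross ξ (e i))) ξ = 0 := by
      rw [hΦ, hcross0, inner_zero_right]
    have h3 : Φ (cross ξ (e i)) (nabla (e i) ξ) = ⟪e i, nabla (e i) ξ⟫ := by
      rw [hΦ, real_inner_comm, hskew, hdouble, hξe i]
      simp [inner_neg_left]
    have h4 : ⟪e i, nabla (e i) ξ⟫ = - ⟪ξ, nabla (e i) (e i)⟫ := by
      have := hDg (e i) (e i) ξ
      rw [show (⟪e i, ξ⟫ : ℝ) = 0 by rw [real_inner_comm]; exact hξe i, hD0] at this
      have hc : ⟪nabla (e i) (e i), ξ⟫ = ⟪ξ, nabla (e i) (e i)⟫ := real_inner_comm _ _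
      linarith
    rw [hnablaPhi, h1, h2, h3, h4, hD0]
    ring
  have hsq : (∑ i : Fin 6, ∑ j : Fin 6,
        nablaPhi (e i) (cross ξ (e i)) ξ * nablaPhi (e j) (cross ξ (e j)) ξ
      = divξ ^ 2) := by
    have hνξ : ⟪nabla ξ ξ, ξ⟫ = 0 := by
      have := hDg ξ ξ ξ
      rw [hξξ, hD1] at this
      have hc : ⟪ξ, nabla ξ ξ⟫ = ⟪nabla ξ ξ, ξ⟫ := real_inner_comm _ _
      linarith
    have hterm : ∀ i : Fin 6, nablaPhi (e i) (cross ξ (e i)) ξ = - ⟪nabla (e i) ξ, e i⟫ := by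
      intro i
      rw [key i]
      have := hDg (e i) (e i) ξ
      rw [show (⟪e i, ξ⟫ : ℝ) = 0 by rw [real_inner_comm]; exact hξe i, hD0] at this
      have hc1 : ⟪nabla (e i) (e i), ξ⟫ = ⟪ξ, nabla (e i) (e i)⟫ := real_inner_comm _ _
      have hc2 : ⟪e i, nabla (e i) ξ⟫ = ⟪nabla (e i) ξ, e i⟫ := real_inner_comm _ _
      linarith
    have hsum : (∑ i : Fin 6, nablaPhi (e i) (cross ξ (e i)) ξ) = - divξ := by
      rw [hdiv, hνξ, add_zero, ← Finset.sum_neg_distrib]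
      exact Finset.sum_congr rfl fun i _ => hterm i
    calc (∑ i : Fin 6, ∑ j : Fin 6,
        nablaPhi (e i) (cross ξ (e i)) ξ * nablaPhi (e j) (cross ξ (e j)) ξ)
        = (∑ i : Fin 6, nablaPhi (e i) (cross ξ (e i)) ξ)
          * (∑ j : Fin 6, nablaPhi (e j) (cross ξ (e j)) ξ) := by
          rw [Finset.sum_mul_sum]
      _ = (-divξ) * (-divξ) := by rw [hsum]
      _ = divξ ^ 2 := by ring
  exact ⟨key, hsq, by rw [hsq]; exact pow_eq_zero_iff (by norm_num)⟩
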